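/- Let G be a group, let G₀ and A be subgroups, let I be a normal subgroup of G, and suppose A ≤ I. Let Gₙ = ⟨G₀, A⟩. Then Gₙ ∩ I = ⟨G₀ ∩ I, k a k⁻¹ : k ∈ G₀, a ∈ A⟩; that is, the subgroup of Gₙ ∩ I generated by G₀ ∩ I together with all G₀-conjugates of elements of A equals Gₙ ∩ I. -/
import Mathlib


/-- For a group `G` with subgroups `G₀`, `A` and a normal subgroup `I`
with `A ≤ I`, the intersection of `Gₙ := ⟨G₀, A⟩` with `I` equals the subgroup generated
by `G₀ ∩ I` together with all `G₀`-conjugates of elements of `A`. -/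
theorem subgroup_sup_inf_normal_eq {G : Type*} [Group G] (G₀ A I : Subgroup G)
    [I.Normal] (hA : A ≤ I) :
    (G₀ ⊔ A) ⊓ I =
      (G₀ ⊓ I) ⊔ Subgroup.closure {x : G | ∃ k ∈ G₀, ∃ a ∈ A, x = k * a * k⁻¹} := by
  set S : Set G := {x : G | ∃ k ∈ G₀, ∃ a ∈ A, x = k * a * k⁻¹} with hS
  set C := Subgroup.closure S with hC
  have hCI : C ≤ I := by
    rw [hC, Subgroup.closure_le]
    rintro x ⟨k, hk, a, ha, rfl⟩
    exact Subgroup.Normal.conj_mem ‹I.Normal› a (hA ha) k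
  have hconj : ∀ g ∈ G₀, ∀ c ∈ C, g * c * g⁻¹ ∈ C := by
    intro g hg c hc
    induction hc using Subgroup.closure_induction with
    | mem x hx =>
      obtain ⟨k, hk, a, ha, rfl⟩ := hx
      refine Subgroup.subset_closure ⟨g * k, mul_mem hg hk, a, ha, ?_⟩
      group
    | one => simpa using one_mem C
    | mul x y hx hy ihx ihy =>
      have : g * (x * y) * g⁻¹ = (g * x * g⁻¹) * (g * y * g⁻¹) := by group
      rw [this]; exact mul_mem ihx ihy
    | inv x hx ihx =>
      have : g * x⁻¹ * g⁻¹ = (g * x * g⁻¹)⁻¹ := by group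
      rw [this]; exact inv_mem ihx
  let P : Subgroup G :=
    { carrier := {x | ∃ g ∈ G₀, ∃ c ∈ C, x = g * c}
      one_mem' := ⟨1, one_mem _, 1, one_mem _, by simp⟩
      mul_mem' := by
        rintro x y ⟨g₁, hg₁, c₁, hc₁, rfl⟩ ⟨g₂, hg₂, c₂, hc₂, rfl⟩
        refine ⟨g₁ * g₂, mul_mem hg₁ hg₂, (g₂⁻¹ * c₁ * g₂) * c₂,
          mul_mem ?_ hc₂, by group⟩
        have := hconj g₂⁻¹ (inv_mem hg₂) c₁ hc₁
        simpa using this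
      inv_mem' := by
        rintro x ⟨g, hg, c, hc, rfl⟩
        exact ⟨g⁻¹, inv_mem hg, g * c⁻¹ * g⁻¹, hconj g hg c⁻¹ (inv_mem hc), by group⟩ }
  refine le_antisymm ?_ ?_
  · rintro x hx
    obtain ⟨hx1, hxI⟩ := Subgroup.mem_inf.mp hx
    have hsub : G₀ ⊔ A ≤ P := by
      refine sup_le (fun g hg => ⟨g, hg, 1, one_mem _, by simp⟩)
        (fun a ha => ⟨1, one_mem _, a, Subgroup.subset_closure ⟨1, one_mem _, a, ha, by simp⟩, by simp⟩)
    obtain ⟨g, hg, c, hc, rfl⟩ := hsub hx1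
    have hgI : g ∈ I := by
      have : g = (g * c) * c⁻¹ := by group
      rw [this]; exact mul_mem hxI (inv_mem (hCI hc))
    exact mul_mem (Subgroup.mem_sup_left (Subgroup.mem_inf.mpr ⟨hg, hgI⟩))
      (Subgroup.mem_sup_right hc)
  · refine sup_le ?_ ?_
    · intro g hg
      obtain ⟨hg₀, hgI⟩ := Subgroup.mem_inf.mp hg
      exact Subgroup.mem_inf.mpr ⟨Subgroup.mem_sup_left hg₀, hgI⟩
    · rw [hC, Subgroup.closure_le]
      rintro x ⟨k, hk, a, ha, rfl⟩
      refine Subgroup.mem_inf.mpr ⟨?_, Subgroup.Normal.conj_mem ‹I.Normal› a (hA ha) k⟩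
      exact mul_mem (mul_mem (Subgroup.mem_sup_left hk) (Subgroup.mem_sup_right ha))
        (inv_mem (Subgroup.mem_sup_left hk))
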